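/- For every n ≥ 1 and every k ≥ 0, the map π sending w to its set of descent pairs, π(w) = {(w_{i+1}, w_i) : i ∈ [n−1], w_i > w_{i+1}}, is a bijection from {w ∈ Pk_n(312) : des(w) = k} onto the collection of k-element subsets of {(a,b) : 1 ≤ a < b ≤ n−1} whose elements are pairwise noncrossing. -/

import Mathlib

open Finset

attribute [local instance] Classical.propDecidable

/-- The value `w_i` of the permutation word `w = w_1 ⋯ w_n` of `[n] = {1,…,n}`
(one-indexed); by convention the value is `0` outside the range, so `w_0 = 0`. -/
def pval (n : ℕ) (w : Equiv.Perm (Fin n)) (i : ℕ) : ℕ :=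
  if h : 1 ≤ i ∧ i ≤ n then ((w ⟨i - 1, by omega⟩ : Fin n) : ℕ) + 1 else 0

/-- The descent set of `w`: positions `i ∈ [n-1]` with `w_i > w_{i+1}`. -/
def desSet (n : ℕ) (w : Equiv.Perm (Fin n)) : Finset ℕ :=
  (Finset.Icc 1 (n - 1)).filter fun i => pval n w (i + 1) < pval n w i

/-- The number of descents of `w`. -/
def des (n : ℕ) (w : Equiv.Perm (Fin n)) : ℕ := (desSet n w).card

/-- `w ∈ Pk_n`: `w` has no double descents and no final descent. -/
def IsPk (n : ℕ) (w : Equiv.Perm (Fin n)) : Prop :=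
  (∀ i ∈ Finset.Icc 2 (n - 1),
      ¬(pval n w i < pval n w (i - 1) ∧ pval n w (i + 1) < pval n w i)) ∧
  ¬(pval n w n < pval n w (n - 1))

/-- `w` is 312-avoiding: there are no positions `i < j < k` with `w_j < w_k < w_i`. -/
def Avoids312 (n : ℕ) (w : Equiv.Perm (Fin n)) : Prop :=
  ∀ i ∈ Finset.Icc 1 n, ∀ j ∈ Finset.Icc 1 n, ∀ k ∈ Finset.Icc 1 n,
    i < j → j < k → ¬(pval n w j < pval n w k ∧ pval n w k < pval n w i)

/-- Two pairs `(a,b)` and `(c,d)` with `a < b`, `c < d` are noncrossing: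
`a,b,c,d` are pairwise distinct and neither `a < c < b < d` nor `c < a < d < b`. -/
def Noncrossing (p q : ℕ × ℕ) : Prop :=
  p.1 ≠ q.1 ∧ p.1 ≠ q.2 ∧ p.2 ≠ q.1 ∧ p.2 ≠ q.2 ∧
  ¬(p.1 < q.1 ∧ q.1 < p.2 ∧ p.2 < q.2) ∧ ¬(q.1 < p.1 ∧ p.1 < q.2 ∧ q.2 < p.2)

/-- The map `π` sending `w` to its set of descent pairs `(w_{i+1}, w_i)`. -/
def descentPairs (n : ℕ) (w : Equiv.Perm (Fin n)) : Finset (ℕ × ℕ) :=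
  (desSet n w).image fun i => (pval n w (i + 1), pval n w i)

namespace DPB

/-- value of the word `L` at 0-indexed position `i` (default 0). -/
def gv (L : List ℕ) (i : ℕ) : ℕ := L.getD i 0

lemma gv_mem (L : List ℕ) (i : ℕ) (h : i < L.length) : gv L i ∈ L := by
  rw [gv, L.getD_eq_getElem 0 h]; exact List.getElem_mem _

lemma gv_inj (L : List ℕ) (hnd : L.Nodup) {i j : ℕ} (hi : i < L.length)
    (hj : j < L.length) (he : gv L i = gv L j) : i = j := by
  rw [gv, gv, L.getD_eq_getElem 0 hi, L.getD_eq_getElem 0 hj] at he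
  exact (List.Nodup.getElem_inj_iff hnd).mp he

/-- 312-avoiding (0-indexed list version). -/
def Av (L : List ℕ) : Prop :=
  ∀ i j k, i < j → j < k → k < L.length → ¬(gv L j < gv L k ∧ gv L k < gv L i)

/-- no (interior) double descents (0-indexed list version). -/
def NoDD (L : List ℕ) : Prop :=
  ∀ i, i + 2 < L.length → ¬(gv L (i+1) < gv L i ∧ gv L (i+2) < gv L (i+1))

noncomputable def dpairs (L : List ℕ) : Finset (ℕ × ℕ) :=
  ((Finset.range (L.length - 1)).filter (fun i => gv L (i+1) < gv L i)).image
    (fun i => (gv L (i+1), gv L i))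

lemma mem_dpairs {L : List ℕ} {p : ℕ × ℕ} :
    p ∈ dpairs L ↔ ∃ i, i + 1 < L.length ∧ gv L (i+1) < gv L i ∧
      p = (gv L (i+1), gv L i) := by
  simp only [dpairs, Finset.mem_image, Finset.mem_filter, Finset.mem_range]
  constructor
  · rintro ⟨i, ⟨hi, hd⟩, rfl⟩; exact ⟨i, by omega, hd, rfl⟩
  · rintro ⟨i, hi, hd, rfl⟩; exact ⟨i, ⟨by omega, hd⟩, rfl⟩

section decomp

variable (A B : List ℕ) (x y : ℕ)

lemma gv_d1 (i : ℕ) (h : i < A.length) : gv (A ++ B ++ [x, y]) i = gv A i := by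
  rw [gv, gv, List.getD_append _ _ _ _ (by simp; omega)]
  rw [List.getD_append _ _ _ _ h]

lemma gv_d2 (i : ℕ) (h1 : A.length ≤ i) (h2 : i < A.length + B.length) :
    gv (A ++ B ++ [x, y]) i = gv B (i - A.length) := by
  rw [gv, gv, List.getD_append _ _ _ _ (by simp; omega)]
  rw [List.getD_append_right _ _ _ _ h1]

lemma gv_d3 (i : ℕ) (h : i = A.length + B.length) : gv (A ++ B ++ [x, y]) i = x := by
  subst h
  rw [gv, List.getD_append_right _ _ _ _ (by simp)]
  simp [List.getD]

lemma gv_d4 (i : ℕ) (h : i = A.length + B.length + 1) : gv (A ++ B ++ [x, y]) i = y := by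
  subst h
  rw [gv, List.getD_append_right _ _ _ _ (by simp +arith)]
  simp [List.getD]

lemma len_d : (A ++ B ++ [x, y]).length = A.length + B.length + 2 := by
  simp; omega

variable {A B x y}

lemma av_decomp (hAv : Av A) (hBv : Av B) (hA : ∀ v ∈ A, v < y)
    (hB : ∀ v ∈ B, y < v ∧ v < x) (hyx : y < x) : Av (A ++ B ++ [x, y]) := by
  intro i j k hij hjk hk h
  rw [len_d] at hk
  set L := A ++ B ++ [x, y] with hL
  set la := A.length with hla
  set lb := B.length with hlb
  have vA : ∀ m, m < la → gv L m < y := fun m hm => by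
    rw [gv_d1 A B x y m hm]; exact hA _ (gv_mem _ _ hm)
  have vB : ∀ m, la ≤ m → m < la + lb → y < gv L m ∧ gv L m < x := fun m h1 h2 => by
    rw [gv_d2 A B x y m h1 h2]; exact hB _ (gv_mem _ _ (by omega))
  rcases Nat.lt_or_ge k la with hkA | hk1
  · exact hAv i j k hij hjk hkA (by
      rw [← gv_d1 A B x y i (by omega), ← gv_d1 A B x y j (by omega),
        ← gv_d1 A B x y k hkA]; exact h)
  rcases Nat.lt_or_ge k (la + lb) with hkB | hk2
  · have hky := vB k hk1 hkB
    have hiB : la ≤ i := by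
      by_contra hc
      have := vA i (by omega)
      omega
    have hjB : la ≤ j := by omega
    refine hBv (i - la) (j - la) (k - la) (by omega) (by omega) (by omega) ?_
    rw [← gv_d2 A B x y i hiB (by omega), ← gv_d2 A B x y j hjB (by omega),
      ← gv_d2 A B x y k hk1 hkB]
    exact h
  rcases Nat.lt_or_ge k (la + lb + 1) with hkx | hky
  · rw [gv_d3 A B x y k (by omega)] at h
    rcases Nat.lt_or_ge i la with hiA | hiB
    · have := vA i hiA; omega
    · have := vB i hiB (by omega); omega
  · rw [gv_d4 A B x y k (by omega)] at h
    rcases Nat.lt_or_ge j la with hjA | hj1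
    · have h1 := vA j hjA
      have h2 := vA i (by omega)
      omega
    rcases Nat.lt_or_ge j (la + lb) with hjB | hj2
    · have := vB j hj1 hjB
      omega
    · rw [gv_d3 A B x y j (by omega)] at h
      omega

lemma nodd_decomp (hAv : NoDD A) (hBv : NoDD B) (hA : ∀ v ∈ A, v < y)
    (hB : ∀ v ∈ B, y < v ∧ v < x) (hyx : y < x) : NoDD (A ++ B ++ [x, y]) := by
  intro i hi h
  rw [len_d] at hi
  set L := A ++ B ++ [x, y] with hL
  set la := A.length with hla
  set lb := B.length with hlb
  have vA : ∀ m, m < la → gv L m < y := fun m hm => by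
    rw [gv_d1 A B x y m hm]; exact hA _ (gv_mem _ _ hm)
  have vB : ∀ m, la ≤ m → m < la + lb → y < gv L m ∧ gv L m < x := fun m h1 h2 => by
    rw [gv_d2 A B x y m h1 h2]; exact hB _ (gv_mem _ _ (by omega))
  rcases Nat.lt_or_ge (i+2) la with h2A | h2a
  · refine hAv i h2A ?_
    rw [← gv_d1 A B x y i (by omega), ← gv_d1 A B x y (i+1) (by omega),
      ← gv_d1 A B x y (i+2) h2A]
    exact h
  rcases Nat.lt_or_ge (i+2) (la + lb) with h2B | h2b
  · rcases Nat.lt_or_ge (i+1) la with h1A | h1a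
    · have := vA (i+1) h1A
      have := vB (i+2) (by omega) h2B
      omega
    rcases Nat.lt_or_ge i la with hiA | hia
    · have := vA i hiA
      have := vB (i+1) h1a (by omega)
      omega
    · refine hBv (i - la) (by omega) ?_
      rw [show i - la + 1 = i + 1 - la by omega, show i - la + 2 = i + 2 - la by omega,
        ← gv_d2 A B x y i hia (by omega), ← gv_d2 A B x y (i+1) h1a (by omega),
        ← gv_d2 A B x y (i+2) (by omega) h2B]
      exact h
  rcases Nat.lt_or_ge (i+2) (la + lb + 1) with h2x | h2y
  · rw [gv_d3 A B x y (i+2) (by omega)] at h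
    rcases Nat.lt_or_ge (i+1) la with h1A | h1a
    · have := vA (i+1) h1A; omega
    · have := vB (i+1) h1a (by omega); omega
  · rw [gv_d4 A B x y (i+2) (by omega), gv_d3 A B x y (i+1) (by omega)] at h
    rcases Nat.lt_or_ge i la with hiA | hia
    · have := vA i hiA; omega
    · have := vB i hia (by omega); omega

lemma dpairs_decomp (hA : ∀ v ∈ A, v < y) (hB : ∀ v ∈ B, y < v ∧ v < x) (hyx : y < x) :
    dpairs (A ++ B ++ [x, y]) = dpairs A ∪ dpairs B ∪ {(y, x)} := by
  set L := A ++ B ++ [x, y] with hL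
  set la := A.length with hla
  set lb := B.length with hlb
  have vA : ∀ m, m < la → gv L m < y := fun m hm => by
    rw [gv_d1 A B x y m hm]; exact hA _ (gv_mem _ _ hm)
  have vB : ∀ m, la ≤ m → m < la + lb → y < gv L m ∧ gv L m < x := fun m h1 h2 => by
    rw [gv_d2 A B x y m h1 h2]; exact hB _ (gv_mem _ _ (by omega))
  ext p
  simp only [Finset.mem_union, Finset.mem_singleton]
  constructor
  · rw [mem_dpairs]
    rintro ⟨i, hi, hd, rfl⟩
    rw [len_d] at hi
    rcases Nat.lt_or_ge (i+1) la with h1A | h1a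
    · left; left
      rw [mem_dpairs]
      rw [gv_d1 A B x y i (by omega), gv_d1 A B x y (i+1) h1A] at hd ⊢
      exact ⟨i, h1A, hd, rfl⟩
    rcases Nat.lt_or_ge (i+1) (la + lb) with h1B | h1b
    · rcases Nat.lt_or_ge i la with hiA | hia
      · have := vA i hiA
        have := vB (i+1) h1a h1B
        omega
      · left; right
        rw [mem_dpairs]
        rw [gv_d2 A B x y i hia (by omega), gv_d2 A B x y (i+1) h1a h1B] at hd ⊢
        exact ⟨i - la, by omega, by rwa [show i - la + 1 = i + 1 - la by omega],
          by rw [show i - la + 1 = i + 1 - la by omega]⟩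
    rcases Nat.lt_or_ge (i+1) (la + lb + 1) with h1x | h1y
    · rw [gv_d3 A B x y (i+1) (by omega)] at hd
      rcases Nat.lt_or_ge i la with hiA | hia
      · have := vA i hiA; omega
      · have := vB i hia (by omega); omega
    · right
      rw [gv_d4 A B x y (i+1) (by omega), gv_d3 A B x y i (by omega)]
  · rintro ((hp | hp) | rfl)
    · rw [mem_dpairs] at hp ⊢
      obtain ⟨i, hi, hd, rfl⟩ := hp
      refine ⟨i, by rw [len_d]; omega, ?_, ?_⟩ <;>
        rw [gv_d1 A B x y i (by omega), gv_d1 A B x y (i+1) hi]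
      exact hd
    · rw [mem_dpairs] at hp ⊢
      obtain ⟨i, hi, hd, rfl⟩ := hp
      refine ⟨la + i, by rw [len_d]; omega, ?_, ?_⟩ <;>
        rw [gv_d2 A B x y (la + i) (by omega) (by omega),
          gv_d2 A B x y (la + i + 1) (by omega) (by omega),
          show la + i - la = i by omega, show la + i + 1 - la = i + 1 by omega]
      exact hd
    · rw [mem_dpairs]
      refine ⟨la + lb, by rw [len_d]; omega, ?_, ?_⟩ <;>
        rw [gv_d4 A B x y (la + lb + 1) rfl, gv_d3 A B x y (la + lb) rfl]
      exact hyx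

end decomp

section snoc

variable (A : List ℕ) (x : ℕ)

lemma gv_s1 (i : ℕ) (h : i < A.length) : gv (A ++ [x]) i = gv A i := by
  rw [gv, gv, List.getD_append _ _ _ _ h]

lemma gv_s2 (i : ℕ) (h : i = A.length) : gv (A ++ [x]) i = x := by
  subst h
  rw [gv, List.getD_append_right _ _ _ _ le_rfl]
  simp [List.getD]

variable {A x}

lemma av_snoc (hAv : Av A) (hA : ∀ v ∈ A, v < x) : Av (A ++ [x]) := by
  intro i j k hij hjk hk h
  simp only [List.length_append, List.length_singleton] at hk
  rcases Nat.lt_or_ge k A.length with hkA | hk1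
  · refine hAv i j k hij hjk hkA ?_
    rw [← gv_s1 A x i (by omega), ← gv_s1 A x j (by omega), ← gv_s1 A x k hkA]
    exact h
  · rw [gv_s2 A x k (by omega)] at h
    have h1 : gv (A ++ [x]) i = gv A i := gv_s1 A x i (by omega)
    have := hA _ (gv_mem A i (by omega))
    omega

lemma nodd_snoc (hAv : NoDD A) (hA : ∀ v ∈ A, v < x) : NoDD (A ++ [x]) := by
  intro i hi h
  simp only [List.length_append, List.length_singleton] at hi
  rcases Nat.lt_or_ge (i+2) A.length with h2A | h2a
  · refine hAv i h2A ?_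
    rw [← gv_s1 A x i (by omega), ← gv_s1 A x (i+1) (by omega), ← gv_s1 A x (i+2) h2A]
    exact h
  · rw [gv_s2 A x (i+2) (by omega), gv_s1 A x (i+1) (by omega)] at h
    have := hA _ (gv_mem A (i+1) (by omega))
    omega

lemma dpairs_snoc (hA : ∀ v ∈ A, v < x) : dpairs (A ++ [x]) = dpairs A := by
  ext p
  rw [mem_dpairs, mem_dpairs]
  constructor
  · rintro ⟨i, hi, hd, rfl⟩
    simp only [List.length_append, List.length_singleton] at hi
    rcases Nat.lt_or_ge (i+1) A.length with h1A | h1a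
    · rw [gv_s1 A x i (by omega), gv_s1 A x (i+1) h1A] at hd ⊢
      exact ⟨i, h1A, hd, rfl⟩
    · rw [gv_s2 A x (i+1) (by omega), gv_s1 A x i (by omega)] at hd
      have := hA _ (gv_mem A i (by omega))
      omega
  · rintro ⟨i, hi, hd, rfl⟩
    rw [← gv_s1 A x i (by omega), ← gv_s1 A x (i+1) hi] at hd ⊢
    exact ⟨i, by simp only [List.length_append, List.length_singleton]; omega, hd, rfl⟩

end snoc

section restrict

lemma gv_take (L : List ℕ) (m i : ℕ) (h : i < m) (h2 : i < L.length) :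
    gv (L.take m) i = gv L i := by
  rw [gv, gv, (L.take m).getD_eq_getElem 0 (by simp; omega), L.getD_eq_getElem 0 h2]
  exact List.getElem_take

lemma gv_drop (L : List ℕ) (m i : ℕ) (h : m + i < L.length) :
    gv (L.drop m) i = gv L (m + i) := by
  rw [gv, gv, (L.drop m).getD_eq_getElem 0 (by simp; omega), L.getD_eq_getElem 0 h]
  rw [List.getElem_drop]

lemma av_take {L : List ℕ} (hAv : Av L) (m : ℕ) : Av (L.take m) := by
  intro i j k hij hjk hk h
  simp only [List.length_take] at hk
  refine hAv i j k hij hjk (by omega) ?_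
  rw [← gv_take L m i (by omega) (by omega), ← gv_take L m j (by omega) (by omega),
    ← gv_take L m k (by omega) (by omega)]
  exact h

lemma av_drop {L : List ℕ} (hAv : Av L) (m : ℕ) : Av (L.drop m) := by
  intro i j k hij hjk hk h
  simp only [List.length_drop] at hk
  refine hAv (m+i) (m+j) (m+k) (by omega) (by omega) (by omega) ?_
  rw [← gv_drop L m i (by omega), ← gv_drop L m j (by omega), ← gv_drop L m k (by omega)]
  exact h

lemma nodd_take {L : List ℕ} (hAv : NoDD L) (m : ℕ) : NoDD (L.take m) := by
  intro i hi h
  simp only [List.length_take] at hi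
  refine hAv i (by omega) ?_
  rw [← gv_take L m i (by omega) (by omega), ← gv_take L m (i+1) (by omega) (by omega),
    ← gv_take L m (i+2) (by omega) (by omega)]
  exact h

lemma nodd_drop {L : List ℕ} (hAv : NoDD L) (m : ℕ) : NoDD (L.drop m) := by
  intro i hi h
  simp only [List.length_drop] at hi
  refine hAv (m+i) (by omega) ?_
  rw [show m+i+1 = m + (i+1) by omega, show m+i+2 = m + (i+2) by omega,
    ← gv_drop L m i (by omega), ← gv_drop L m (i+1) (by omega),
    ← gv_drop L m (i+2) (by omega)]
  exact h

end restrict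

lemma exists_gv_of_mem {L : List ℕ} {v : ℕ} (h : v ∈ L) :
    ∃ i, i < L.length ∧ gv L i = v := by
  obtain ⟨i, hi, he⟩ := List.mem_iff_getElem.mp h
  exact ⟨i, hi, by rw [gv, L.getD_eq_getElem 0 hi, he]⟩

lemma split_small_large (c : ℕ) : ∀ (M : List ℕ), (∀ x ∈ M, x ≠ c) →
    (∀ i j, i < j → j < M.length → ¬(c < gv M i ∧ gv M j < c)) →
    M = M.filter (fun v => v < c) ++ M.filter (fun v => c < v) := by
  intro M
  induction M with
  | nil => intro _ _; rfl
  | cons a M ih =>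
    intro hne horder
    rcases lt_or_gt_of_ne (hne a (by simp)) with hlt | hgt
    · have hM : M = M.filter (fun v => v < c) ++ M.filter (fun v => c < v) := by
        refine ih (fun x hx => hne x (by simp [hx])) ?_
        intro i j hij hj h
        refine horder (i+1) (j+1) (by omega) (by simpa using Nat.succ_lt_succ hj) ?_
        rw [gv, gv, List.getD_cons_succ, List.getD_cons_succ]
        exact h
      rw [List.filter_cons_of_pos (by simpa using hlt),
        List.filter_cons_of_neg (by simp; omega)]
      rw [List.cons_append]
      exact congrArg _ hM
    · have hall : ∀ x ∈ M, c < x := by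
        intro v hv
        obtain ⟨i, hi, he⟩ := exists_gv_of_mem hv
        have := horder 0 (i+1) (by omega) (by simpa using Nat.succ_lt_succ hi)
        rw [gv, gv, List.getD_cons_zero, List.getD_cons_succ] at this
        have hvne := hne v (by simp [hv])
        rw [gv] at he
        omega
      rw [List.filter_cons_of_neg (by simp; omega),
        List.filter_cons_of_pos (by simpa using hgt)]
      rw [List.filter_eq_nil_iff.mpr (by intro v hv; simp; have := hall v hv; omega),
        List.filter_eq_self.mpr (by intro v hv; simpa using hall v hv), List.nil_append]

lemma max_pos {L : List ℕ} {hi : ℕ} (hnd : L.Nodup) (hAv : Av L) (hDD : NoDD L)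
    (hbd : ∀ v ∈ L, v ≤ hi) {p : ℕ} (hp : p < L.length) (hgv : gv L p = hi) :
    L.length ≤ p + 2 := by
  by_contra hc
  push_neg at hc
  have ha : gv L (p+1) < hi := by
    have h1 := hbd _ (gv_mem L (p+1) (by omega))
    have h2 : gv L (p+1) ≠ hi := fun he => by
      have := gv_inj L hnd (i := p+1) (j := p) (by omega) hp (he.trans hgv.symm); omega
    omega
  have hb : gv L (p+2) < hi := by
    have h1 := hbd _ (gv_mem L (p+2) (by omega))
    have h2 : gv L (p+2) ≠ hi := fun he => by
      have := gv_inj L hnd (i := p+2) (j := p) (by omega) hp (he.trans hgv.symm); omega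
    omega
  rcases Nat.lt_trichotomy (gv L (p+1)) (gv L (p+2)) with h | h | h
  · exact hAv p (p+1) (p+2) (by omega) (by omega) (by omega) ⟨h, by omega⟩
  · have := gv_inj L hnd (i := p+1) (j := p+2) (by omega) (by omega) h; omega
  · exact hDD p (by omega) ⟨by omega, h⟩

lemma dpairs_top_inj {L : List ℕ} (hnd : L.Nodup) {p q : ℕ × ℕ}
    (hp : p ∈ dpairs L) (hq : q ∈ dpairs L) (he : p.2 = q.2) : p = q := by
  rw [mem_dpairs] at hp hq
  obtain ⟨i, hi, hdi, rfl⟩ := hp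
  obtain ⟨j, hj, hdj, rfl⟩ := hq
  simp only at he ⊢
  have : i = j := gv_inj L hnd (by omega) (by omega) he
  subst this; rfl

lemma noncrossing_symm {p q : ℕ × ℕ} (h : Noncrossing p q) : Noncrossing q p := by
  obtain ⟨h1, h2, h3, h4, h5, h6⟩ := h
  exact ⟨h1.symm, h3.symm, h2.symm, h4.symm, h6, h5⟩

lemma dpairs_noncrossing {L : List ℕ} (hnd : L.Nodup) (hAv : Av L) (hDD : NoDD L) :
    ∀ p ∈ dpairs L, ∀ q ∈ dpairs L, p ≠ q → Noncrossing p q := by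
  have aux : ∀ i j, i < j → j + 1 < L.length → gv L (i+1) < gv L i → gv L (j+1) < gv L j →
      Noncrossing (gv L (i+1), gv L i) (gv L (j+1), gv L j) := by
    intro i j hij hj hdi hdj
    have hij2 : i + 2 ≤ j := by
      by_contra hc
      exact hDD i (by omega) ⟨hdi, by rw [show i+2 = j+1 by omega, show i+1 = j by omega]; exact hdj⟩
    have e1 : gv L (i+1) ≠ gv L (j+1) := fun he => by
      have := gv_inj L hnd (i := i+1) (j := j+1) (by omega) (by omega) he; omega
    have e2 : gv L (i+1) ≠ gv L j := fun he => by
      have := gv_inj L hnd (i := i+1) (j := j) (by omega) (by omega) he; omega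
    have e3 : gv L i ≠ gv L (j+1) := fun he => by
      have := gv_inj L hnd (i := i) (j := j+1) (by omega) (by omega) he; omega
    have e4 : gv L i ≠ gv L j := fun he => by
      have := gv_inj L hnd (i := i) (j := j) (by omega) (by omega) he; omega
    have cA : ¬(gv L (i+1) < gv L (j+1) ∧ gv L (j+1) < gv L i) :=
      hAv i (i+1) (j+1) (by omega) (by omega) (by omega)
    have cB : ¬(gv L (i+1) < gv L j ∧ gv L j < gv L i) :=
      hAv i (i+1) j (by omega) (by omega) (by omega)
    exact ⟨e1, e2, e3, e4, fun h => cA ⟨h.1, h.2.1⟩, fun h => cB ⟨by omega, by omega⟩⟩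
  intro p hp q hq hne
  rw [mem_dpairs] at hp hq
  obtain ⟨i, hi, hdi, rfl⟩ := hp
  obtain ⟨j, hj, hdj, rfl⟩ := hq
  rcases Nat.lt_trichotomy i j with h | h | h
  · exact aux i j h hj hdi hdj
  · subst h; exact absurd rfl hne
  · exact noncrossing_symm (aux j i h hi hdj hdi)

lemma length_eq_of_mem_Icc {L : List ℕ} {lo hi : ℕ} (hnd : L.Nodup)
    (hmem : ∀ v, v ∈ L ↔ lo ≤ v ∧ v ≤ hi) : L.length = hi + 1 - lo := by
  have h1 : L.toFinset = Finset.Icc lo hi := by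
    ext v; simp [hmem v, Finset.mem_Icc]
  have h2 := List.toFinset_card_of_nodup hnd
  rw [h1, Nat.card_Icc] at h2
  omega

noncomputable def build (S : Finset (ℕ × ℕ)) (lo hi : ℕ) : List ℕ :=
  if hi < lo then []
  else if hi = lo then [lo]
  else if h3 : ∃ c, (c, hi) ∈ S ∧ lo ≤ c ∧ c < hi then
    build S lo (h3.choose - 1) ++ build S (h3.choose + 1) (hi - 1) ++ [hi, h3.choose]
  else build S lo (hi - 1) ++ [hi]
termination_by hi + 1 - lo
decreasing_by
  · have := h3.choose_spec; omega
  · have := h3.choose_spec; omega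
  · omega

lemma build_ltlo {S : Finset (ℕ × ℕ)} {lo hi : ℕ} (h : hi < lo) : build S lo hi = [] := by
  rw [build, if_pos h]

lemma build_eqlo {S : Finset (ℕ × ℕ)} {lo hi : ℕ} (h : hi = lo) : build S lo hi = [lo] := by
  rw [build, if_neg (by omega), if_pos h]

lemma build_branch {S : Finset (ℕ × ℕ)} {lo hi : ℕ} (h1 : ¬ hi < lo) (h2 : ¬ hi = lo)
    (h3 : ∃ c, (c, hi) ∈ S ∧ lo ≤ c ∧ c < hi) :
    build S lo hi = build S lo (h3.choose - 1) ++ build S (h3.choose + 1) (hi - 1)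
      ++ [hi, h3.choose] := by
  rw [build, if_neg h1, if_neg h2, dif_pos h3]

lemma build_none {S : Finset (ℕ × ℕ)} {lo hi : ℕ} (h1 : ¬ hi < lo) (h2 : ¬ hi = lo)
    (h3 : ¬ ∃ c, (c, hi) ∈ S ∧ lo ≤ c ∧ c < hi) :
    build S lo hi = build S lo (hi - 1) ++ [hi] := by
  rw [build, if_neg h1, if_neg h2, dif_neg h3]

theorem build_spec (S : Finset (ℕ × ℕ)) (hlt : ∀ p ∈ S, p.1 < p.2)
    (hNC : ∀ p ∈ S, ∀ q ∈ S, p ≠ q → Noncrossing p q) :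
    ∀ N lo hi, hi + 1 - lo ≤ N → 1 ≤ lo →
    (∀ p ∈ S, ((lo ≤ p.1 ∧ p.1 ≤ hi) ∨ (lo ≤ p.2 ∧ p.2 ≤ hi)) → lo ≤ p.1 ∧ p.2 ≤ hi) →
    (build S lo hi).Nodup ∧ (∀ v, v ∈ build S lo hi ↔ lo ≤ v ∧ v ≤ hi) ∧
    Av (build S lo hi) ∧ NoDD (build S lo hi) ∧
    dpairs (build S lo hi) = S.filter (fun p => lo ≤ p.1 ∧ p.2 ≤ hi) := by
  intro N
  induction N with
  | zero =>
    intro lo hi hm hlo hinv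
    have hlt' : hi < lo := by omega
    rw [build_ltlo hlt']
    refine ⟨List.nodup_nil, fun v => by simp; omega, ?_, ?_, ?_⟩
    · intro i j k _ _ hk; simp at hk
    · intro i h; simp at h
    · rw [show dpairs [] = ∅ by simp [dpairs]]
      symm
      rw [Finset.filter_eq_empty_iff]
      intro p hp
      have := hlt p hp
      omega
  | succ N ih =>
    intro lo hi hm hlo hinv
    rcases Nat.lt_or_ge hi lo with hlt' | hge
    · rw [build_ltlo hlt']
      refine ⟨List.nodup_nil, fun v => by simp; omega, ?_, ?_, ?_⟩
      · intro i j k _ _ hk; simp at hk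
      · intro i h; simp at h
      · rw [show dpairs [] = ∅ by simp [dpairs]]
        symm
        rw [Finset.filter_eq_empty_iff]
        intro p hp
        have := hlt p hp
        omega
    rcases Nat.eq_or_lt_of_le hge with heq | hltlo
    · rw [build_eqlo heq.symm]
      refine ⟨by simp, fun v => by simp; omega, ?_, ?_, ?_⟩
      · intro i j k hij hjk hk; simp at hk; omega
      · intro i h; simp at h
      · rw [show dpairs [lo] = ∅ by simp [dpairs]]
        symm
        rw [Finset.filter_eq_empty_iff]
        intro p hp
        have := hlt p hp
        omega
    by_cases h3 : ∃ c, (c, hi) ∈ S ∧ lo ≤ c ∧ c < hi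
    · set c := h3.choose with hc
      obtain ⟨hcS, hclo, hchi⟩ := h3.choose_spec
      rw [build_branch (by omega) (by omega) h3]
      set A := build S lo (c - 1) with hA
      set B := build S (c + 1) (hi - 1) with hB
      -- invariant for A
      have hinvA : ∀ p ∈ S, ((lo ≤ p.1 ∧ p.1 ≤ c - 1) ∨ (lo ≤ p.2 ∧ p.2 ≤ c - 1)) →
          lo ≤ p.1 ∧ p.2 ≤ c - 1 := by
        intro p hp htouch
        have hmas := hinv p hp (by omega)
        have hplt := hlt p hp
        by_cases hpc : p = (c, hi)
        · subst hpc; simp at htouch ⊢; omega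
        · obtain ⟨d1, d2, d3, d4, c1, c2⟩ := hNC p hp (c, hi) hcS hpc
          simp only at d1 d2 d3 d4 c1 c2
          omega
      have hinvB : ∀ p ∈ S, ((c + 1 ≤ p.1 ∧ p.1 ≤ hi - 1) ∨ (c + 1 ≤ p.2 ∧ p.2 ≤ hi - 1)) →
          c + 1 ≤ p.1 ∧ p.2 ≤ hi - 1 := by
        intro p hp htouch
        have hmas := hinv p hp (by omega)
        have hplt := hlt p hp
        by_cases hpc : p = (c, hi)
        · subst hpc; simp at htouch ⊢; omega
        · obtain ⟨d1, d2, d3, d4, c1, c2⟩ := hNC p hp (c, hi) hcS hpc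
          simp only at d1 d2 d3 d4 c1 c2
          omega
      obtain ⟨ndA, memA, avA, nddA, dpA⟩ := ih lo (c - 1) (by omega) hlo hinvA
      obtain ⟨ndB, memB, avB, nddB, dpB⟩ := ih (c + 1) (hi - 1) (by omega) (by omega) hinvB
      rw [← hA] at ndA memA avA nddA dpA
      rw [← hB] at ndB memB avB nddB dpB
      have hvA : ∀ v ∈ A, v < c := fun v hv => by have := (memA v).mp hv; omega
      have hvB : ∀ v ∈ B, c < v ∧ v < hi := fun v hv => by have := (memB v).mp hv; omega
      refine ⟨?_, ?_, av_decomp avA avB hvA hvB hchi, nodd_decomp nddA nddB hvA hvB hchi, ?_⟩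
      · -- nodup
        simp only [List.nodup_append, List.disjoint_left]
        refine ⟨⟨ndA, ndB, ?_⟩, by simp; omega, ?_⟩
        · intro a haA b haB
          have := hvA a haA; have := hvB b haB; omega
        · intro a ha
          simp only [List.mem_append] at ha
          rcases ha with haA | haB
          · have := hvA a haA; simp; omega
          · have := hvB a haB; simp; omega
      · -- membership
        intro v
        simp only [List.mem_append, List.mem_cons, List.mem_singleton, List.not_mem_nil,
          or_false, memA v, memB v]
        omega
      · rw [dpairs_decomp hvA hvB hchi, dpA, dpB]
        ext p
        simp only [Finset.mem_union, Finset.mem_filter, Finset.mem_singleton]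
        constructor
        · rintro ((⟨hp, h1, h2⟩ | ⟨hp, h1, h2⟩) | rfl)
          · exact ⟨hp, by omega, by omega⟩
          · exact ⟨hp, by omega, by omega⟩
          · exact ⟨hcS, by omega, by omega⟩
        · rintro ⟨hp, h1, h2⟩
          have hplt := hlt p hp
          by_cases hpc : p = (c, hi)
          · right; exact hpc
          · left
            obtain ⟨d1, d2, d3, d4, c1, c2⟩ := hNC p hp (c, hi) hcS hpc
            simp only at d1 d2 d3 d4 c1 c2
            rcases Nat.lt_or_ge p.1 c with hp1 | hp1
            · left; exact ⟨hp, by omega, by omega⟩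
            · right; exact ⟨hp, by omega, by omega⟩
    · rw [build_none (by omega) (by omega) h3]
      have hinv' : ∀ p ∈ S, ((lo ≤ p.1 ∧ p.1 ≤ hi - 1) ∨ (lo ≤ p.2 ∧ p.2 ≤ hi - 1)) →
          lo ≤ p.1 ∧ p.2 ≤ hi - 1 := by
        intro p hp htouch
        have hmas := hinv p hp (by omega)
        have hplt := hlt p hp
        have hne : p.2 ≠ hi := by
          intro he
          exact h3 ⟨p.1, by rw [← he]; exact hp, by omega, by omega⟩
        omega
      obtain ⟨ndA, memA, avA, nddA, dpA⟩ := ih lo (hi - 1) (by omega) hlo hinv'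
      have hvA : ∀ v ∈ build S lo (hi - 1), v < hi := fun v hv => by
        have := (memA v).mp hv; omega
      refine ⟨?_, ?_, av_snoc avA hvA, nodd_snoc nddA hvA, ?_⟩
      · simp only [List.nodup_append, List.disjoint_left]
        exact ⟨ndA, by simp, fun a ha => by have := hvA a ha; simp; omega⟩
      · intro v
        simp only [List.mem_append, List.mem_singleton, List.mem_cons, List.not_mem_nil,
          or_false, memA v]
        omega
      · rw [dpairs_snoc hvA, dpA]
        ext p
        simp only [Finset.mem_filter]
        constructor
        · rintro ⟨hp, h1, h2⟩; exact ⟨hp, by omega, by omega⟩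
        · rintro ⟨hp, h1, h2⟩
          have hplt := hlt p hp
          have hne : p.2 ≠ hi := by
            intro he
            exact h3 ⟨p.1, by rw [← he]; exact hp, by omega, by omega⟩
          exact ⟨hp, by omega, by omega⟩

lemma dpairs_mem {L : List ℕ} {p : ℕ × ℕ} (hp : p ∈ dpairs L) : p.1 ∈ L ∧ p.2 ∈ L := by
  rw [mem_dpairs] at hp
  obtain ⟨i, hi, hd, rfl⟩ := hp
  exact ⟨gv_mem L (i+1) hi, gv_mem L i (by omega)⟩

lemma eq_take_append_two {L : List ℕ} (h : 2 ≤ L.length) :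
    L = L.take (L.length - 2) ++ [gv L (L.length - 2), gv L (L.length - 1)] := by
  conv_lhs => rw [← List.take_append_drop (L.length - 2) L]
  congr 1
  apply List.ext_getElem
  · simp; omega
  · intro i hi1 hi2
    simp only [List.length_drop] at hi1
    rw [List.getElem_drop]
    have : i = 0 ∨ i = 1 := by omega
    rcases this with rfl | rfl <;>
      simp only [List.getElem_cons_zero, List.getElem_cons_succ] <;>
      rw [gv, L.getD_eq_getElem 0 (by omega)] <;>
      congr 1 <;> omega

theorem build_complete (S : Finset (ℕ × ℕ)) :
    ∀ N lo hi (L : List ℕ), hi + 1 - lo ≤ N → 1 ≤ lo →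
    L.Nodup → (∀ v, v ∈ L ↔ lo ≤ v ∧ v ≤ hi) → Av L → NoDD L →
    (∀ p : ℕ × ℕ, (p ∈ S ∧ lo ≤ p.1 ∧ p.2 ≤ hi) ↔ p ∈ dpairs L) →
    L = build S lo hi := by
  intro N
  induction N with
  | zero =>
    intro lo hi L hm hlo hnd hmem hAv hDD hS
    have hlen : L.length = hi + 1 - lo := length_eq_of_mem_Icc hnd hmem
    have hLnil : L = [] := List.length_eq_zero_iff.mp (by omega)
    rw [build_ltlo (by omega), hLnil]
  | succ N ih =>
    intro lo hi L hm hlo hnd hmem hAv hDD hS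
    have hlen : L.length = hi + 1 - lo := length_eq_of_mem_Icc hnd hmem
    rcases Nat.lt_or_ge hi lo with hlt' | hge
    · have hLnil : L = [] := List.length_eq_zero_iff.mp (by omega)
      rw [build_ltlo hlt', hLnil]
    rcases Nat.eq_or_lt_of_le hge with heq | hltlo
    · rw [build_eqlo heq.symm]
      have h1 : L.length = 1 := by omega
      obtain ⟨a, rfl⟩ := List.length_eq_one_iff.mp h1
      have := (hmem a).mp (by simp)
      have : a = lo := by omega
      rw [this]
    -- lo < hi
    have hlen2 : 2 ≤ L.length := by omega
    obtain ⟨ph, hph, hgvph⟩ := exists_gv_of_mem ((hmem hi).mpr ⟨by omega, le_rfl⟩)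
    have hbd : ∀ v ∈ L, v ≤ hi := fun v hv => ((hmem v).mp hv).2
    have hph2 : L.length ≤ ph + 2 := max_pos hnd hAv hDD hbd hph hgvph
    have huniq : ∀ i, i < L.length → gv L i = hi → i = ph :=
      fun i hi1 hi2 => gv_inj L hnd hi1 hph (hi2.trans hgvph.symm)
    rcases Nat.eq_or_lt_of_le hph2 with hcase | hcase
    · -- hi is second-to-last: ph = L.length - 2
      have hphe : ph = L.length - 2 := by omega
      set c := gv L (L.length - 1) with hcdef
      have hcmem : c ∈ L := gv_mem L _ (by omega)
      have hcbd := (hmem c).mp hcmem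
      have hcne : c ≠ hi := fun he => by
        have := huniq (L.length - 1) (by omega) he; omega
      have hchi : c < hi := by omega
      have hdesc : (c, hi) ∈ dpairs L := by
        rw [mem_dpairs]
        refine ⟨L.length - 2, by omega, ?_, ?_⟩
        · rw [show L.length - 2 + 1 = L.length - 1 by omega, ← hphe, hgvph, ← hcdef]
          exact hchi
        · rw [show L.length - 2 + 1 = L.length - 1 by omega, ← hphe, hgvph, ← hcdef]
      have hcS := (hS (c, hi)).mpr hdesc
      have h3 : ∃ c', (c', hi) ∈ S ∧ lo ≤ c' ∧ c' < hi := ⟨c, hcS.1, hcS.2.1, hchi⟩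
      have hchoose : h3.choose = c := by
        obtain ⟨hc'S, hc'lo, hc'hi⟩ := h3.choose_spec
        have hdp := (hS (h3.choose, hi)).mp ⟨hc'S, hc'lo, le_rfl⟩
        rw [mem_dpairs] at hdp
        obtain ⟨i, hi1, hd1, he⟩ := hdp
        rw [Prod.mk.injEq] at he
        obtain ⟨he1, he2⟩ := he
        have : i = ph := huniq i (by omega) he2.symm
        rw [he1, this, hphe, show L.length - 2 + 1 = L.length - 1 by omega]
      -- decompose L
      set M := L.take (L.length - 2) with hM
      have hLsplit : L = M ++ [hi, c] := by
        rw [hM, ← hgvph, hphe]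
        exact eq_take_append_two hlen2
      have hlenM : M.length = L.length - 2 := by
        rw [hM, List.length_take]; omega
      have hgvM : ∀ i, i < M.length → gv M i = gv L i := fun i hi1 => by
        rw [hM]; exact gv_take L _ i (by omega) (by omega)
      have hmemM : ∀ v, v ∈ M ↔ (lo ≤ v ∧ v ≤ hi) ∧ v ≠ c ∧ v ≠ hi := by
        intro v
        constructor
        · intro hv
          obtain ⟨i, hi1, he⟩ := exists_gv_of_mem hv
          rw [hgvM i hi1] at he
          have hvL : v ∈ L := he ▸ gv_mem L i (by omega)
          refine ⟨(hmem v).mp hvL, fun hvc => ?_, fun hvh => ?_⟩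
          · subst hvc
            have := gv_inj L hnd (i := i) (j := L.length - 1) (by omega) (by omega)
              (he.trans hcdef)
            omega
          · subst hvh
            have := huniq i (by omega) he
            omega
        · rintro ⟨⟨h1, h2⟩, h3', h4⟩
          obtain ⟨i, hi1, he⟩ := exists_gv_of_mem ((hmem v).mpr ⟨h1, h2⟩)
          have hine1 : i ≠ L.length - 1 := fun hie => by rw [hie, ← hcdef] at he; exact h3' he.symm
          have hine2 : i ≠ L.length - 2 := fun hie => by
            rw [hie, ← hphe, hgvph] at he; exact h4 he.symm
          rw [← hgvM i (by omega)] at he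
          exact he ▸ gv_mem M i (by omega)
      have hMnc : ∀ x ∈ M, x ≠ c := fun x hx => ((hmemM x).mp hx).2.1
      have horder : ∀ i j, i < j → j < M.length → ¬(c < gv M i ∧ gv M j < c) := by
        rintro i j hij hj ⟨o1, o2⟩
        refine hAv i j (L.length - 1) hij (by omega) (by omega) ?_
        rw [← hcdef, ← hgvM i (by omega), ← hgvM j (by omega)]
        exact ⟨o2, o1⟩
      have hsplit := split_small_large c M hMnc horder
      set A := M.filter (fun v => v < c) with hAdef
      set B := M.filter (fun v => c < v) with hBdef
      have hmemA : ∀ v, v ∈ A ↔ lo ≤ v ∧ v ≤ c - 1 := by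
        intro v
        rw [hAdef, List.mem_filter]
        simp only [decide_eq_true_eq, hmemM v]
        omega
      have hmemB : ∀ v, v ∈ B ↔ c + 1 ≤ v ∧ v ≤ hi - 1 := by
        intro v
        rw [hBdef, List.mem_filter]
        simp only [decide_eq_true_eq, hmemM v]
        omega
      have hndA : A.Nodup := List.Nodup.filter _ (hnd.sublist (hM ▸ List.take_sublist _ _))
      have hndB : B.Nodup := List.Nodup.filter _ (hnd.sublist (hM ▸ List.take_sublist _ _))
      -- A and B as take/drop of L
      have hABlen : A.length + B.length = M.length := by
        conv_rhs => rw [hsplit]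
        simp
      have hAtake : A = L.take A.length := by
        conv_lhs => rw [← List.take_left (l₁ := A) (l₂ := B), ← hsplit, hM, List.take_take,
          min_eq_left (show A.length ≤ L.length - 2 by omega)]
      have hBdrop : B = (L.take (L.length - 2)).drop A.length := by
        conv_lhs => rw [← List.drop_left (l₁ := A) (l₂ := B), ← hsplit, hM]
      have hAvA : Av A := hAtake ▸ av_take hAv A.length
      have hAvB : Av B := hBdrop ▸ av_drop (av_take hAv (L.length - 2)) A.length
      have hDDA : NoDD A := hAtake ▸ nodd_take hDD A.length
      have hDDB : NoDD B := hBdrop ▸ nodd_drop (nodd_take hDD (L.length - 2)) A.length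
      have hvA : ∀ v ∈ A, v < c := fun v hv => by have := (hmemA v).mp hv; omega
      have hvB : ∀ v ∈ B, c < v ∧ v < hi := fun v hv => by have := (hmemB v).mp hv; omega
      have hLdecomp : L = A ++ B ++ [hi, c] := by
        rw [← hsplit]
        exact hLsplit
      have hdp : dpairs L = dpairs A ∪ dpairs B ∪ {(c, hi)} := by
        rw [hLdecomp] at hAv hDD ⊢
        exact dpairs_decomp hvA hvB hchi
      have hSA : ∀ p : ℕ × ℕ, (p ∈ S ∧ lo ≤ p.1 ∧ p.2 ≤ c - 1) ↔ p ∈ dpairs A := by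
        intro p
        constructor
        · rintro ⟨hp, h1, h2⟩
          have := (hS p).mp ⟨hp, h1, by omega⟩
          rw [hdp] at this
          simp only [Finset.mem_union, Finset.mem_singleton] at this
          rcases this with (hA' | hB') | he
          · exact hA'
          · have := (hmemB p.2).mp (dpairs_mem hB').2; omega
          · rw [he] at h2; simp at h2; omega
        · intro hp
          have h1 := (hmemA p.1).mp (dpairs_mem hp).1
          have h2 := (hmemA p.2).mp (dpairs_mem hp).2
          have : p ∈ dpairs L := by
            rw [hdp]; simp only [Finset.mem_union]; exact Or.inl (Or.inl hp)
          have := (hS p).mpr this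
          exact ⟨this.1, by omega, by omega⟩
      have hSB : ∀ p : ℕ × ℕ, (p ∈ S ∧ c + 1 ≤ p.1 ∧ p.2 ≤ hi - 1) ↔ p ∈ dpairs B := by
        intro p
        constructor
        · rintro ⟨hp, h1, h2⟩
          have hlop1 : lo ≤ p.1 := by omega
          have := (hS p).mp ⟨hp, hlop1, by omega⟩
          rw [hdp] at this
          simp only [Finset.mem_union, Finset.mem_singleton] at this
          rcases this with (hA' | hB') | he
          · have := (hmemA p.1).mp (dpairs_mem hA').1; omega
          · exact hB'
          · rw [he] at h2; simp at h2; omega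
        · intro hp
          have h1 := (hmemB p.1).mp (dpairs_mem hp).1
          have h2 := (hmemB p.2).mp (dpairs_mem hp).2
          have : p ∈ dpairs L := by
            rw [hdp]; simp only [Finset.mem_union]; exact Or.inl (Or.inr hp)
          have := (hS p).mpr this
          exact ⟨this.1, by omega, by omega⟩
      have hArec : A = build S lo (c - 1) :=
        ih lo (c - 1) A (by omega) hlo hndA hmemA hAvA hDDA hSA
      have hlenA : A.length = c - lo := by
        rw [length_eq_of_mem_Icc hndA hmemA]; omega
      have hBrec : B = build S (c + 1) (hi - 1) :=
        ih (c + 1) (hi - 1) B (by omega) (by omega) hndB hmemB hAvB hDDB hSB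
      rw [build_branch (by omega) (by omega) h3, hchoose, ← hArec, ← hBrec]
      exact hLdecomp
    · -- hi is last: ph = L.length - 1
      have hphe : ph = L.length - 1 := by omega
      have hnoc : ¬ ∃ c', (c', hi) ∈ S ∧ lo ≤ c' ∧ c' < hi := by
        rintro ⟨c', hc'S, h1, h2⟩
        have := (hS (c', hi)).mp ⟨hc'S, h1, le_rfl⟩
        rw [mem_dpairs] at this
        obtain ⟨i, hi1, hd1, he⟩ := this
        rw [Prod.mk.injEq] at he
        have : i = ph := huniq i (by omega) he.2.symm
        omega
      set M := L.take (L.length - 1) with hM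
      have hlenM : M.length = L.length - 1 := by rw [hM, List.length_take]; omega
      have hgvM : ∀ i, i < M.length → gv M i = gv L i := fun i hi1 => by
        rw [hM]; exact gv_take L _ i (by omega) (by omega)
      have hLsplit : L = M ++ [hi] := by
        rw [hM, ← hgvph, hphe]
        conv_lhs => rw [← List.take_append_drop (L.length - 1) L]
        congr 1
        apply List.ext_getElem
        · simp; omega
        · intro i hi1 hi2
          simp only [List.length_drop] at hi1
          have hieq : i = 0 := by omega
          subst hieq
          rw [List.getElem_drop]
          simp only [List.getElem_cons_zero]
          rw [gv, L.getD_eq_getElem 0 (by omega)]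
          congr 1
      have hmemM : ∀ v, v ∈ M ↔ lo ≤ v ∧ v ≤ hi - 1 := by
        intro v
        constructor
        · intro hv
          obtain ⟨i, hi1, he⟩ := exists_gv_of_mem hv
          rw [hgvM i hi1] at he
          have hvL : v ∈ L := he ▸ gv_mem L i (by omega)
          have hb := (hmem v).mp hvL
          have : v ≠ hi := fun hvh => by
            subst hvh
            have := huniq i (by omega) he
            omega
          omega
        · rintro ⟨h1, h2⟩
          obtain ⟨i, hi1, he⟩ := exists_gv_of_mem ((hmem v).mpr ⟨h1, by omega⟩)
          have hine : i ≠ L.length - 1 := fun hie => by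
            rw [hie, ← hphe, hgvph] at he
            omega
          rw [← hgvM i (by omega)] at he
          exact he ▸ gv_mem M i (by omega)
      have hndM : M.Nodup := hnd.sublist (hM ▸ List.take_sublist _ _)
      have hAvM : Av M := hM ▸ av_take hAv _
      have hDDM : NoDD M := hM ▸ nodd_take hDD _
      have hvM : ∀ v ∈ M, v < hi := fun v hv => by have := (hmemM v).mp hv; omega
      have hdpM : dpairs L = dpairs M := by
        conv_lhs => rw [hLsplit]
        exact dpairs_snoc hvM
      have hSM : ∀ p : ℕ × ℕ, (p ∈ S ∧ lo ≤ p.1 ∧ p.2 ≤ hi - 1) ↔ p ∈ dpairs M := by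
        intro p
        constructor
        · rintro ⟨hp, h1, h2⟩
          have := (hS p).mp ⟨hp, h1, by omega⟩
          rwa [hdpM] at this
        · intro hp
          have h2 := (hmemM p.2).mp (dpairs_mem hp).2
          have := (hS p).mpr (by rwa [hdpM])
          exact ⟨this.1, this.2.1, by omega⟩
      have hMrec : M = build S lo (hi - 1) :=
        ih lo (hi - 1) M (by omega) hlo hndM hmemM hAvM hDDM hSM
      rw [build_none (by omega) (by omega) hnoc, ← hMrec]
      exact hLsplit

/-! ### Bridge between permutations and words -/

noncomputable def word (n : ℕ) (w : Equiv.Perm (Fin n)) : List ℕ :=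
  (List.range n).map (fun i => pval n w (i+1))

lemma word_length (n : ℕ) (w : Equiv.Perm (Fin n)) : (word n w).length = n := by
  simp [word]

lemma gv_word (n : ℕ) (w : Equiv.Perm (Fin n)) (i : ℕ) (h : i < n) :
    gv (word n w) i = pval n w (i+1) := by
  rw [gv, (word n w).getD_eq_getElem 0 (by rw [word_length]; exact h)]
  simp [word]

lemma pval_bounds (n : ℕ) (w : Equiv.Perm (Fin n)) (i : ℕ) (h1 : 1 ≤ i) (h2 : i ≤ n) :
    1 ≤ pval n w i ∧ pval n w i ≤ n := by
  rw [pval, dif_pos ⟨h1, h2⟩]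
  have := (w ⟨i - 1, by omega⟩).isLt
  omega

lemma pval_inj (n : ℕ) (w : Equiv.Perm (Fin n)) {i j : ℕ} (h1 : 1 ≤ i) (h2 : i ≤ n)
    (h3 : 1 ≤ j) (h4 : j ≤ n) (he : pval n w i = pval n w j) : i = j := by
  rw [pval, dif_pos ⟨h1, h2⟩, pval, dif_pos ⟨h3, h4⟩] at he
  have : (⟨i - 1, by omega⟩ : Fin n) = ⟨j - 1, by omega⟩ :=
    w.injective (Fin.ext (by omega))
  have := Fin.mk.injEq .. ▸ this
  omega

lemma pval_surj (n : ℕ) (w : Equiv.Perm (Fin n)) (v : ℕ) (h1 : 1 ≤ v) (h2 : v ≤ n) :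
    ∃ i, 1 ≤ i ∧ i ≤ n ∧ pval n w i = v := by
  set u := w.symm ⟨v - 1, by omega⟩ with hu
  refine ⟨(u : ℕ) + 1, by omega, by have := u.isLt; omega, ?_⟩
  rw [pval, dif_pos ⟨by omega, by have := u.isLt; omega⟩]
  have he : (⟨(u : ℕ) + 1 - 1, by have := u.isLt; omega⟩ : Fin n) = u := by
    apply Fin.ext; simp
  rw [he, hu, Equiv.apply_symm_apply]
  simp
  omega

lemma word_nodup (n : ℕ) (w : Equiv.Perm (Fin n)) : (word n w).Nodup := by
  refine List.Nodup.map_on ?_ (List.nodup_range (n := n))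
  intro x hx y hy he
  simp only [List.mem_range] at hx hy
  have := pval_inj n w (i := x+1) (j := y+1) (by omega) (by omega) (by omega) (by omega) he
  omega

lemma word_mem (n : ℕ) (w : Equiv.Perm (Fin n)) (v : ℕ) :
    v ∈ word n w ↔ 1 ≤ v ∧ v ≤ n := by
  simp only [word, List.mem_map, List.mem_range]
  constructor
  · rintro ⟨i, hi, rfl⟩
    exact pval_bounds n w (i+1) (by omega) (by omega)
  · rintro ⟨h1, h2⟩
    obtain ⟨i, hi1, hi2, he⟩ := pval_surj n w v h1 h2
    exact ⟨i - 1, by omega, by rw [show i - 1 + 1 = i by omega]; exact he⟩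

lemma av_word_iff (n : ℕ) (w : Equiv.Perm (Fin n)) : Avoids312 n w ↔ Av (word n w) := by
  constructor
  · intro h i j k hij hjk hk
    rw [word_length] at hk
    rw [gv_word n w i (by omega), gv_word n w j (by omega), gv_word n w k hk]
    exact h (i+1) (by simp [Finset.mem_Icc]; omega) (j+1) (by simp [Finset.mem_Icc]; omega)
      (k+1) (by simp [Finset.mem_Icc]; omega) (by omega) (by omega)
  · intro h i hi j hj k hk hij hjk
    simp only [Finset.mem_Icc] at hi hj hk
    have := h (i-1) (j-1) (k-1) (by omega) (by omega) (by rw [word_length]; omega)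
    rw [gv_word n w (i-1) (by omega), gv_word n w (j-1) (by omega),
      gv_word n w (k-1) (by omega), show i-1+1 = i by omega, show j-1+1 = j by omega,
      show k-1+1 = k by omega] at this
    exact this

lemma nodd_word_iff (n : ℕ) (w : Equiv.Perm (Fin n)) :
    (∀ i ∈ Finset.Icc 2 (n - 1),
      ¬(pval n w i < pval n w (i - 1) ∧ pval n w (i + 1) < pval n w i)) ↔
    NoDD (word n w) := by
  constructor
  · intro h t ht
    rw [word_length] at ht
    rw [gv_word n w t (by omega), gv_word n w (t+1) (by omega), gv_word n w (t+2) ht]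
    have := h (t+2) (by simp [Finset.mem_Icc]; omega)
    rw [show t+2-1 = t+1 by omega, show t+2+1 = t+3 by omega] at this
    exact fun hc => this ⟨hc.1, hc.2⟩
  · intro h i hi
    simp only [Finset.mem_Icc] at hi
    intro hc
    refine h (i-2) (by rw [word_length]; omega) ?_
    rw [gv_word n w (i-2) (by omega), gv_word n w (i-2+1) (by omega),
      gv_word n w (i-2+2) (by omega), show i-2+1+1 = i by omega,
      show i-2+1 = i-1 by omega]
    exact hc

lemma descentPairs_eq (n : ℕ) (w : Equiv.Perm (Fin n)) :
    descentPairs n w = dpairs (word n w) := by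
  ext p
  rw [mem_dpairs]
  simp only [descentPairs, desSet, Finset.mem_image, Finset.mem_filter, Finset.mem_Icc]
  constructor
  · rintro ⟨i, ⟨⟨h1, h2⟩, hd⟩, rfl⟩
    refine ⟨i - 1, by rw [word_length]; omega, ?_, ?_⟩ <;>
      rw [gv_word n w (i-1) (by omega), gv_word n w (i-1+1) (by omega),
        show i-1+1 = i by omega]
    exact hd
  · rintro ⟨t, ht, hd, rfl⟩
    rw [word_length] at ht
    refine ⟨t + 1, ⟨⟨by omega, by omega⟩, ?_⟩, ?_⟩ <;>
      rw [← gv_word n w t (by omega), ← gv_word n w (t+1) (by omega)]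
    exact hd

lemma des_eq_card (n : ℕ) (w : Equiv.Perm (Fin n)) : des n w = (descentPairs n w).card := by
  rw [des, descentPairs]
  refine (Finset.card_image_of_injOn ?_).symm
  intro i hi j hj he
  simp only [desSet, Finset.mem_coe, Finset.mem_filter, Finset.mem_Icc] at hi hj
  have h2 : pval n w i = pval n w j := congrArg Prod.snd he
  exact pval_inj n w (i := i) (j := j) (by omega) (by omega) (by omega) (by omega) h2

lemma exists_perm_of_list (n : ℕ) (L : List ℕ) (hnd : L.Nodup)
    (hmem : ∀ v, v ∈ L ↔ 1 ≤ v ∧ v ≤ n) :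
    ∃ w : Equiv.Perm (Fin n), word n w = L := by
  have hlen : L.length = n := by
    have := length_eq_of_mem_Icc hnd hmem; omega
  have hbd : ∀ i : Fin n, gv L i - 1 < n := fun i => by
    have := (hmem (gv L i)).mp (gv_mem L i (by rw [hlen]; exact i.isLt))
    omega
  set f : Fin n → Fin n := fun i => ⟨gv L i - 1, hbd i⟩ with hf
  have hinj : Function.Injective f := by
    intro a b he
    have h1 := (hmem (gv L a)).mp (gv_mem L a (by rw [hlen]; exact a.isLt))
    have h2 := (hmem (gv L b)).mp (gv_mem L b (by rw [hlen]; exact b.isLt))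
    have h3 : gv L a - 1 = gv L b - 1 := by
      have := congrArg Fin.val he
      simpa [hf] using this
    have h4 : gv L (a : ℕ) = gv L (b : ℕ) := by omega
    exact Fin.ext (gv_inj L hnd (by rw [hlen]; exact a.isLt) (by rw [hlen]; exact b.isLt) h4)
  set e := Equiv.ofBijective f ((Fintype.bijective_iff_injective_and_card f).mpr ⟨hinj, rfl⟩)
    with he
  refine ⟨e, ?_⟩
  have key : ∀ i, i < n → gv (word n e) i = gv L i := by
    intro i hi
    rw [gv_word n e i hi, pval, dif_pos ⟨by omega, by omega⟩]
    have h5 : (⟨i+1-1, by omega⟩ : Fin n) = ⟨i, hi⟩ := Fin.ext (by simp)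
    rw [h5]
    have h6 : e ⟨i, hi⟩ = f ⟨i, hi⟩ := rfl
    rw [h6]
    have := (hmem (gv L i)).mp (gv_mem L i (by omega))
    simp only [hf]
    omega
  apply List.ext_getElem (by rw [word_length, hlen])
  intro i h1 h2
  have h1' : i < n := by rw [word_length] at h1; exact h1
  have hk := key i h1'
  rw [gv, gv, (word n e).getD_eq_getElem 0 h1, L.getD_eq_getElem 0 h2] at hk
  exact hk

lemma pval_eq (n : ℕ) (w : Equiv.Perm (Fin n)) (i : ℕ) (h1 : 1 ≤ i) (h2 : i ≤ n) :
    pval n w i = (w ⟨i - 1, by omega⟩ : ℕ) + 1 := by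
  rw [pval, dif_pos ⟨h1, h2⟩]

lemma word_inj (n : ℕ) {w w' : Equiv.Perm (Fin n)} (h : word n w = word n w') : w = w' := by
  apply Equiv.ext
  intro x
  have hx := x.isLt
  have hgv : gv (word n w) (x : ℕ) = gv (word n w') (x : ℕ) := by rw [h]
  rw [gv_word n w x hx, gv_word n w' x hx,
    pval_eq n w ((x : ℕ)+1) (by omega) (by omega),
    pval_eq n w' ((x : ℕ)+1) (by omega) (by omega)] at hgv
  have hfin : (⟨(x : ℕ) + 1 - 1, by omega⟩ : Fin n) = x := Fin.ext (by simp)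
  rw [hfin] at hgv
  exact Fin.ext (by omega)

/-- no descent pair has top value `n`, for `w` with no final descent. -/
lemma top_lt (n : ℕ) (w : Equiv.Perm (Fin n)) (hn : 1 ≤ n)
    (hAv : Av (word n w)) (hDD : NoDD (word n w))
    (hnf : ¬(pval n w n < pval n w (n - 1))) :
    ∀ p ∈ dpairs (word n w), p.2 ≤ n - 1 := by
  intro p hp
  rw [mem_dpairs] at hp
  obtain ⟨i, hi, hd, rfl⟩ := hp
  rw [word_length] at hi
  simp only
  have hbd : ∀ v ∈ word n w, v ≤ n := fun v hv => ((word_mem n w v).mp hv).2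
  have h2 := (word_mem n w (gv (word n w) i)).mp (gv_mem _ i (by rw [word_length]; omega))
  by_contra hc
  have hgn : gv (word n w) i = n := by omega
  have := max_pos (word_nodup n w) hAv hDD hbd (p := i) (by rw [word_length]; omega) hgn
  rw [word_length] at this
  -- i = n - 2, descent at i is the final descent
  have hie : i = n - 2 := by omega
  have hn2 : 2 ≤ n := by omega
  apply hnf
  rw [hie, show n-2+1 = n-1 by omega] at hd
  rw [gv_word n w (n-1) (by omega), gv_word n w (n-2) (by omega),
    show n-1+1 = n by omega, show n-2+1 = n-1 by omega] at hd
  exact hd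

theorem main (n : ℕ) (hn : 1 ≤ n) (k : ℕ) :
    Set.BijOn (descentPairs n)
      {w : Equiv.Perm (Fin n) | IsPk n w ∧ Avoids312 n w ∧ des n w = k}
      {S : Finset (ℕ × ℕ) | S.card = k ∧
        (∀ p ∈ S, 1 ≤ p.1 ∧ p.1 < p.2 ∧ p.2 ≤ n - 1) ∧
        (∀ p ∈ S, ∀ q ∈ S, p ≠ q → Noncrossing p q)} := by
  refine ⟨?_, ?_, ?_⟩
  · -- MapsTo
    rintro w ⟨hpk, hav, hdes⟩
    have hAv := (av_word_iff n w).mp hav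
    have hDD := (nodd_word_iff n w).mp hpk.1
    have hdp := descentPairs_eq n w
    refine ⟨?_, ?_, ?_⟩
    · rw [← des_eq_card n w]; exact hdes
    · intro p hp
      rw [hdp] at hp
      have h1 := (word_mem n w p.1).mp (dpairs_mem hp).1
      have h3 := top_lt n w hn hAv hDD hpk.2 p hp
      rw [mem_dpairs] at hp
      obtain ⟨i, hi, hd, rfl⟩ := hp
      exact ⟨h1.1, hd, h3⟩
    · intro p hp q hq hne
      rw [hdp] at hp hq
      exact dpairs_noncrossing (word_nodup n w) hAv hDD p hp q hq hne
  · -- InjOn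
    rintro w ⟨hpk, hav, hdes⟩ w' ⟨hpk', hav', hdes'⟩ he
    have key : ∀ (u : Equiv.Perm (Fin n)), IsPk n u → Avoids312 n u →
        word n u = build (descentPairs n u) 1 n := by
      intro u h1 h2
      refine build_complete (descentPairs n u) n 1 n (word n u) (by omega) le_rfl
        (word_nodup n u) (word_mem n u) ((av_word_iff n u).mp h2)
        ((nodd_word_iff n u).mp h1.1) ?_
      intro p
      rw [descentPairs_eq n u]
      constructor
      · rintro ⟨hp, _, _⟩; exact hp
      · intro hp
        have hp1 := (word_mem n u p.1).mp (dpairs_mem hp).1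
        have hp2 := (word_mem n u p.2).mp (dpairs_mem hp).2
        exact ⟨hp, hp1.1, hp2.2⟩
    have h1 := key w hpk hav
    have h2 := key w' hpk' hav'
    rw [he] at h1
    exact word_inj n (h1.trans h2.symm)
  · -- SurjOn
    rintro S ⟨hcard, hbnd, hNC⟩
    have hlt : ∀ p ∈ S, p.1 < p.2 := fun p hp => (hbnd p hp).2.1
    obtain ⟨hnd, hmem, hAv, hDD, hdp⟩ := build_spec S hlt hNC n 1 n (by omega) le_rfl
      (fun p hp _ => by have := hbnd p hp; omega)
    have hdpS : dpairs (build S 1 n) = S := by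
      rw [hdp]
      ext p
      rw [Finset.mem_filter]
      exact ⟨fun h => h.1, fun h => ⟨h, by have := hbnd p h; omega⟩⟩
    obtain ⟨w, hword⟩ := exists_perm_of_list n (build S 1 n) hnd hmem
    have hAvw : Av (word n w) := by rw [hword]; exact hAv
    have hDDw : NoDD (word n w) := by rw [hword]; exact hDD
    have hdpw : dpairs (word n w) = S := by rw [hword]; exact hdpS
    have hnf : ¬(pval n w n < pval n w (n - 1)) := by
      intro hfd
      rcases Nat.eq_or_lt_of_le hn with h1 | h1
      · -- n = 1
        have hb := pval_bounds n w n (by omega) le_rfl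
        have h0 : pval n w (n-1) = 0 := by rw [pval, dif_neg (by omega)]
        omega
      · -- n ≥ 2 : find position of n
        obtain ⟨q, hq, hgq⟩ := exists_gv_of_mem ((word_mem n w n).mpr ⟨by omega, le_rfl⟩)
        rw [word_length] at hq
        have hbdw : ∀ v ∈ word n w, v ≤ n := fun v hv => ((word_mem n w v).mp hv).2
        have hq2 := max_pos (word_nodup n w) hAvw hDDw hbdw (p := q)
          (by rw [word_length]; exact hq) hgq
        rw [word_length] at hq2
        rcases Nat.eq_or_lt_of_le (show q ≤ n - 1 by omega) with hqe | hqlt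
        · -- n at last position : pval n w n = n, no descent possible
          have hgl : gv (word n w) (n-1) = n := by rw [← hqe]; exact hgq
          rw [gv_word n w (n-1) (by omega), show n-1+1 = n by omega] at hgl
          have hb := pval_bounds n w (n-1) (by omega) (by omega)
          omega
        · -- n at position n-2 : final descent pair has top n, contradiction
          have hqe2 : q = n - 2 := by omega
          have hgv2 : gv (word n w) (n-2) = n := by rw [← hqe2]; exact hgq
          have hdd : gv (word n w) (n-1) < gv (word n w) (n-2) := by
            rw [hgv2]
            have h3 := (word_mem n w (gv (word n w) (n-1))).mp
              (gv_mem _ (n-1) (by rw [word_length]; omega))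
            have h4 : gv (word n w) (n-1) ≠ n := fun he => by
              have := gv_inj (word n w) (word_nodup n w) (i := n-1) (j := n-2)
                (by rw [word_length]; omega) (by rw [word_length]; omega)
                (he.trans hgv2.symm)
              omega
            omega
          have hpair : (gv (word n w) (n-1), n) ∈ dpairs (word n w) := by
            rw [mem_dpairs]
            refine ⟨n-2, by rw [word_length]; omega, ?_, ?_⟩
            · rw [show n-2+1 = n-1 by omega]; exact hdd
            · rw [show n-2+1 = n-1 by omega, hgv2]
          rw [hdpw] at hpair
          have := hbnd _ hpair
          simp only at this
          omega
    refine ⟨w, ⟨⟨(nodd_word_iff n w).mpr hDDw, hnf⟩, (av_word_iff n w).mpr hAvw, ?_⟩, ?_⟩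
    · rw [des_eq_card n w, descentPairs_eq n w, hdpw]
      exact hcard
    · rw [descentPairs_eq n w, hdpw]

end DPB

/-- The map `π` is a bijection from `{w ∈ Pk_n(312) : des w = k}` onto the
`k`-element subsets of `{(a,b) : 1 ≤ a < b ≤ n-1}` whose elements are pairwise
noncrossing. -/
theorem descentPairs_bijection (n : ℕ) (hn : 1 ≤ n) (k : ℕ) :
    Set.BijOn (descentPairs n)
      {w : Equiv.Perm (Fin n) | IsPk n w ∧ Avoids312 n w ∧ des n w = k}
      {S : Finset (ℕ × ℕ) | S.card = k ∧
        (∀ p ∈ S, 1 ≤ p.1 ∧ p.1 < p.2 ∧ p.2 ≤ n - 1) ∧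
        (∀ p ∈ S, ∀ q ∈ S, p ≠ q → Noncrossing p q)} := by
  exact DPB.main n hn k
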